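/- Let A₁ ∈ ℝ^{m×k}, A₂ ∈ ℝ^{m×(n−k)}, and let B₂ ∈ ℝ^{m×(n−k)} be any matrix with rank(A₁ B₂) ≤ r. Define B₂' := P_{A₁}(A₂) + P⊥_{A₁}(B₂). Then rank(A₁ B₂') ≤ r and ‖A₂ − B₂'‖_F ≤ ‖A₂ − B₂‖_F. (In the constrained low-rank approximation problem (2) one may without loss of generality replace the P_{A₁}-component of the second block by P_{A₁}(A₂).) -/

import Mathlib

open Matrix

/-- Frobenius norm of a real matrix. -/
noncomputable def frobNorm {m n : ℕ} (A : Matrix (Fin m) (Fin n) ℝ) : ℝ :=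
  Real.sqrt (∑ i, ∑ j, (A i j) ^ 2)

/-- Column space of a matrix, as a subspace of Euclidean space. -/
noncomputable def colSpace {m k : ℕ} (A : Matrix (Fin m) (Fin k) ℝ) :
    Submodule ℝ (EuclideanSpace ℝ (Fin m)) :=
  LinearMap.range (Matrix.toEuclideanLin A)

/-- `P_{A₁}`: orthogonal projection onto the column space of `A₁`, applied columnwise. -/
noncomputable def projCols {m k l : ℕ} (A₁ : Matrix (Fin m) (Fin k) ℝ)
    (B : Matrix (Fin m) (Fin l) ℝ) : Matrix (Fin m) (Fin l) ℝ :=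
  Matrix.of fun i j =>
    (Submodule.orthogonalProjectionOnto (colSpace A₁) (WithLp.toLp 2 (fun i' => B i' j)) : EuclideanSpace ℝ (Fin m)) i

/-- `P⊥_{A₁}`: orthogonal projection onto the orthogonal complement of the column
space of `A₁`, applied columnwise. -/
noncomputable def projOrthCols {m k l : ℕ} (A₁ : Matrix (Fin m) (Fin k) ℝ)
    (B : Matrix (Fin m) (Fin l) ℝ) : Matrix (Fin m) (Fin l) ℝ :=
  Matrix.of fun i j =>
    (Submodule.orthogonalProjectionOnto (colSpace A₁)ᗮ (WithLp.toLp 2 (fun i' => B i' j)) : EuclideanSpace ℝ (Fin m)) i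

lemma colSpace_sub_span {m k : ℕ} (A : Matrix (Fin m) (Fin k) ℝ)
    (x : EuclideanSpace ℝ (Fin m)) (hx : x ∈ colSpace A) :
    (x : Fin m → ℝ) ∈ Submodule.span ℝ (Set.range Aᵀ) := by
  obtain ⟨v, rfl⟩ := hx
  rw [show Set.range Aᵀ = Set.range A.col from rfl, ← Matrix.range_mulVecLin]
  exact ⟨WithLp.ofLp v, rfl⟩

lemma sq_norm_eucl {m : ℕ} (x : EuclideanSpace ℝ (Fin m)) :
    ∑ i, x i ^ 2 = ‖x‖ ^ 2 := by
  rw [EuclideanSpace.norm_eq, Real.sq_sqrt (by positivity)]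
  simp [sq_abs]

/-- In the constrained low-rank approximation problem one may w.l.o.g. replace the
`P_{A₁}`-component of the second block by `P_{A₁}(A₂)`: if `rank (A₁ B₂) ≤ r`, then
`B₂' := P_{A₁}(A₂) + P⊥_{A₁}(B₂)` is still feasible and is at least as close to `A₂`. -/
theorem proj_replacement_improves
    (m k l r : ℕ)
    (A₁ : Matrix (Fin m) (Fin k) ℝ) (A₂ B₂ : Matrix (Fin m) (Fin l) ℝ)
    (hrank : (Matrix.fromCols A₁ B₂).rank ≤ r)
    (B₂' : Matrix (Fin m) (Fin l) ℝ)
    (hB₂' : B₂' = projCols A₁ A₂ + projOrthCols A₁ B₂) :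
    (Matrix.fromCols A₁ B₂').rank ≤ r ∧
    frobNorm (A₂ - B₂') ≤ frobNorm (A₂ - B₂) := by
  subst hB₂'
  set K := colSpace A₁ with hK
  have hPorth : ∀ (w : EuclideanSpace ℝ (Fin m)),
      (Submodule.orthogonalProjectionOnto Kᗮ w : EuclideanSpace ℝ (Fin m)) = w - Submodule.orthogonalProjectionOnto K w := by
    intro w
    have h := K.starProjection_add_starProjection_orthogonal w
    exact eq_sub_of_add_eq' h
  constructor
  · refine le_trans ?_ hrank
    unfold Matrix.rank
    apply Submodule.finrank_mono
    rw [Matrix.range_mulVecLin, Matrix.range_mulVecLin,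
        show (Matrix.fromCols A₁ B₂).col = (Matrix.fromCols A₁ B₂)ᵀ from rfl,
        show (Matrix.fromCols A₁ (projCols A₁ A₂ + projOrthCols A₁ B₂)).col
          = (Matrix.fromCols A₁ (projCols A₁ A₂ + projOrthCols A₁ B₂))ᵀ from rfl,
        Matrix.transpose_fromCols, Matrix.transpose_fromCols]
    have hrange : ∀ {p q : ℕ} (M : Matrix (Fin p) (Fin m) ℝ) (N : Matrix (Fin q) (Fin m) ℝ),
        Set.range (Matrix.fromRows M N) = Set.range M ∪ Set.range N := by
      intro p q M N
      exact Set.Sum.elim_range M N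
    rw [hrange, hrange, Submodule.span_union, Submodule.span_union]
    refine sup_le le_sup_left ?_
    rw [Submodule.span_le]
    rintro _ ⟨j, rfl⟩
    set a : EuclideanSpace ℝ (Fin m) := WithLp.toLp 2 (fun i => A₂ i j) with ha
    set b : EuclideanSpace ℝ (Fin m) := WithLp.toLp 2 (fun i => B₂ i j) with hb
    have hcol : ((projCols A₁ A₂ + projOrthCols A₁ B₂)ᵀ j : Fin m → ℝ)
        = (((Submodule.orthogonalProjectionOnto K a : EuclideanSpace ℝ (Fin m))
            + (b - (Submodule.orthogonalProjectionOnto K b : EuclideanSpace ℝ (Fin m)))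
            : EuclideanSpace ℝ (Fin m)) : Fin m → ℝ) := by
      funext i
      have h1 : (Submodule.orthogonalProjectionOnto Kᗮ b : EuclideanSpace ℝ (Fin m)) i
          = b i - (Submodule.orthogonalProjectionOnto K b : EuclideanSpace ℝ (Fin m)) i := by
        rw [hPorth b]; rfl
      show (projCols A₁ A₂) i j + (projOrthCols A₁ B₂) i j = _
      simp only [projCols, projOrthCols, Matrix.of_apply]
      rw [h1]
      rfl
    rw [hcol]
    have hmemA : ∀ (w : EuclideanSpace ℝ (Fin m)),
        ((Submodule.orthogonalProjectionOnto K w : EuclideanSpace ℝ (Fin m)) : Fin m → ℝ)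
          ∈ Submodule.span ℝ (Set.range A₁ᵀ) :=
      fun w => colSpace_sub_span A₁ _ (Submodule.orthogonalProjectionOnto K w).2
    refine Submodule.add_mem _ (Submodule.mem_sup_left (hmemA a)) ?_
    refine Submodule.sub_mem _ ?_ (Submodule.mem_sup_left (hmemA b))
    exact Submodule.mem_sup_right (Submodule.subset_span ⟨j, rfl⟩)
  · rw [frobNorm, frobNorm]
    apply Real.sqrt_le_sqrt
    have hswap : ∀ (C : Matrix (Fin m) (Fin l) ℝ),
        ∑ i, ∑ j, (C i j) ^ 2 = ∑ j, ∑ i, (C i j) ^ 2 := fun C => Finset.sum_comm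
    rw [hswap, hswap]
    apply Finset.sum_le_sum
    intro j _
    set a : EuclideanSpace ℝ (Fin m) := WithLp.toLp 2 (fun i => A₂ i j) with ha
    set b : EuclideanSpace ℝ (Fin m) := WithLp.toLp 2 (fun i => B₂ i j) with hb
    have hcol : ∀ i, (A₂ - (projCols A₁ A₂ + projOrthCols A₁ B₂)) i j
        = (Submodule.orthogonalProjectionOnto Kᗮ (a - b) : EuclideanSpace ℝ (Fin m)) i := by
      intro i
      have h1 := congrArg (fun x : Kᗮ => (x : EuclideanSpace ℝ (Fin m)) i) (map_sub (Submodule.orthogonalProjectionOnto Kᗮ) a b)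
      have h2 := congrArg (fun x : EuclideanSpace ℝ (Fin m) => x i) (hPorth a)
      simp only [Matrix.sub_apply, Matrix.add_apply, projCols, projOrthCols, Matrix.of_apply]
      have : (Submodule.orthogonalProjectionOnto Kᗮ (a - b) : EuclideanSpace ℝ (Fin m)) i
          = (Submodule.orthogonalProjectionOnto Kᗮ a : EuclideanSpace ℝ (Fin m)) i
            - (Submodule.orthogonalProjectionOnto Kᗮ b : EuclideanSpace ℝ (Fin m)) i := by
        rw [map_sub]; rfl
      rw [this]
      have h3 : (Submodule.orthogonalProjectionOnto Kᗮ a : EuclideanSpace ℝ (Fin m)) i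
          = a i - (Submodule.orthogonalProjectionOnto K a : EuclideanSpace ℝ (Fin m)) i := by
        rw [hPorth a]; rfl
      rw [h3]
      show A₂ i j - ((Submodule.orthogonalProjectionOnto K a : EuclideanSpace ℝ (Fin m)) i
          + (Submodule.orthogonalProjectionOnto Kᗮ b : EuclideanSpace ℝ (Fin m)) i)
        = a i - (Submodule.orthogonalProjectionOnto K a : EuclideanSpace ℝ (Fin m)) i
          - (Submodule.orthogonalProjectionOnto Kᗮ b : EuclideanSpace ℝ (Fin m)) i
      have hai : a i = A₂ i j := rfl
      rw [hai]
      ring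
    calc ∑ i, ((A₂ - (projCols A₁ A₂ + projOrthCols A₁ B₂)) i j) ^ 2
        = ∑ i, ((Submodule.orthogonalProjectionOnto Kᗮ (a - b) : EuclideanSpace ℝ (Fin m)) i) ^ 2 := by
          exact Finset.sum_congr rfl fun i _ => by rw [hcol i]
      _ = ‖(Submodule.orthogonalProjectionOnto Kᗮ (a - b) : EuclideanSpace ℝ (Fin m))‖ ^ 2 := sq_norm_eucl _
      _ ≤ ‖a - b‖ ^ 2 := by
          apply pow_le_pow_left₀ (norm_nonneg _) _ 2
          calc ‖(Submodule.orthogonalProjectionOnto Kᗮ (a - b) : EuclideanSpace ℝ (Fin m))‖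
              ≤ ‖Submodule.orthogonalProjectionOnto Kᗮ‖ * ‖a - b‖ :=
                (Submodule.orthogonalProjectionOnto Kᗮ).le_opNorm (a - b)
            _ ≤ 1 * ‖a - b‖ :=
                mul_le_mul_of_nonneg_right (Submodule.orthogonalProjectionOnto_norm_le _) (norm_nonneg _)
            _ = ‖a - b‖ := one_mul _
      _ = ∑ i, ((A₂ - B₂) i j) ^ 2 := by
          rw [← sq_norm_eucl]
          exact Finset.sum_congr rfl fun i _ => rfl
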